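/- For a G-invariant finite MDP, every fixed point Q* of the Bellman optimality operator (T Q* = Q*) is G-invariant: Q*(g • s, g • a) = Q*(s, a) for all g ∈ G, s ∈ S, a ∈ A. -/
import Mathlib


open Finset

/-- The Bellman optimality operator:
`(T Q)(s, a) = r(s, a) + γ · ∑_{s'} p(s, a, s') · (max_{a'} Q(s', a'))`. -/
noncomputable def bellman {S A : Type*} [Fintype S] [Fintype A] [Nonempty A]
    (p : S → A → S → ℝ) (r : S → A → ℝ) (γ : ℝ)
    (Q : S → A → ℝ) : S → A → ℝ :=
  fun s a =>
    r s a + γ * ∑ s', p s a s' * (univ.sup' univ_nonempty (fun a' => Q s' a'))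

lemma abs_sup'_sub_sup'_le {A : Type*} [Fintype A] [Nonempty A]
    (f h : A → ℝ) (C : ℝ) (hC : ∀ a, |f a - h a| ≤ C) :
    |univ.sup' univ_nonempty f - univ.sup' univ_nonempty h| ≤ C := by
  rw [abs_sub_le_iff]
  constructor <;>
  · rw [sub_le_iff_le_add]
    apply Finset.sup'_le
    intro a _
    have := hC a
    rw [abs_sub_le_iff] at this
    first
      | calc f a ≤ h a + C := by linarith [this.1]
             _ ≤ C + univ.sup' univ_nonempty h := by
                have := Finset.le_sup' h (Finset.mem_univ a); linarith
      | calc h a ≤ f a + C := by linarith [this.2]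
             _ ≤ C + univ.sup' univ_nonempty f := by
                have := Finset.le_sup' f (Finset.mem_univ a); linarith

/-- For a `G`-invariant finite MDP, every fixed point of the Bellman optimality
operator is `G`-invariant: `Q*(g • s, g • a) = Q*(s, a)`. -/
theorem fixedPoint_bellman_invariant
    {G S A : Type*} [Group G]
    [Fintype S] [Fintype A] [Nonempty S] [Nonempty A]
    [MulAction G S] [MulAction G A]
    (p : S → A → S → ℝ) (r : S → A → ℝ) (γ : ℝ)
    (hp_nonneg : ∀ s a s', 0 ≤ p s a s')
    (hp_sum : ∀ s a, ∑ s', p s a s' = 1)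
    (hγ0 : 0 ≤ γ) (hγ1 : γ < 1)
    (hp_inv : ∀ (g : G) (s : S) (a : A) (s' : S),
      p (g • s) (g • a) (g • s') = p s a s')
    (hr_inv : ∀ (g : G) (s : S) (a : A), r (g • s) (g • a) = r s a)
    (Q : S → A → ℝ)
    (hfix : bellman p r γ Q = Q) :
    ∀ (g : G) (s : S) (a : A), Q (g • s) (g • a) = Q s a := by
  intro g
  set F : S × A → ℝ := fun x => |Q (g • x.1) (g • x.2) - Q x.1 x.2| with hF
  obtain ⟨⟨s₀, a₀⟩, -, hmax⟩ :=
    Finset.exists_max_image (univ : Finset (S × A)) F univ_nonempty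
  set C : ℝ := F (s₀, a₀) with hCdef
  have hCmax : ∀ s a, |Q (g • s) (g • a) - Q s a| ≤ C := fun s a =>
    hmax (s, a) (mem_univ _)
  -- value function
  set V : S → ℝ := fun s' => univ.sup' univ_nonempty (fun a' => Q s' a') with hV
  have hVinv : ∀ s', |V (g • s') - V s'| ≤ C := by
    intro s'
    have hre : V (g • s') = univ.sup' univ_nonempty (fun a' => Q (g • s') (g • a')) := by
      simp only [hV]
      apply le_antisymm
      · apply Finset.sup'_le
        intro a' _
        have : Q (g • s') a' = Q (g • s') (g • (g⁻¹ • a')) := by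
          rw [smul_inv_smul]
        rw [this]
        exact Finset.le_sup' (fun a' => Q (g • s') (g • a')) (Finset.mem_univ _)
      · apply Finset.sup'_le
        intro a' _
        exact Finset.le_sup' (fun a' => Q (g • s') a') (Finset.mem_univ _)
    rw [hre]
    exact abs_sup'_sub_sup'_le _ _ C (fun a' => hCmax s' a')
  have key : ∀ s a, Q (g • s) (g • a) - Q s a
      = γ * ∑ s', p s a s' * (V (g • s') - V s') := by
    intro s a
    have h1 := congrFun (congrFun hfix (g • s)) (g • a)
    have h2 := congrFun (congrFun hfix s) a
    simp only [bellman] at h1 h2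
    have hsum : ∑ s', p (g • s) (g • a) s' * V s'
        = ∑ s', p s a s' * V (g • s') := by
      rw [← Equiv.sum_comp (MulAction.toPerm g : Equiv.Perm S)
        (fun s' => p (g • s) (g • a) s' * V s')]
      refine Finset.sum_congr rfl fun s' _ => ?_
      simp [hp_inv]
    have hVdef : ∀ s', (univ.sup' univ_nonempty fun a' => Q s' a') = V s' := fun _ => rfl
    rw [← h1, ← h2, hr_inv, hsum]
    simp only [hVdef]
    have expand : ∑ s', p s a s' * (V (g • s') - V s')
        = (∑ s', p s a s' * V (g • s')) - ∑ s', p s a s' * V s' := by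
      rw [← Finset.sum_sub_distrib]
      exact Finset.sum_congr rfl fun s' _ => by ring
    rw [expand]
    ring
  have hCle : C ≤ γ * C := by
    calc C = |Q (g • s₀) (g • a₀) - Q s₀ a₀| := rfl
    _ = |γ * ∑ s', p s₀ a₀ s' * (V (g • s') - V s')| := by rw [key]
    _ = γ * |∑ s', p s₀ a₀ s' * (V (g • s') - V s')| := by
        rw [abs_mul, abs_of_nonneg hγ0]
    _ ≤ γ * ∑ s', p s₀ a₀ s' * |V (g • s') - V s'| := by
        apply mul_le_mul_of_nonneg_left _ hγ0
        refine (Finset.abs_sum_le_sum_abs _ _).trans ?_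
        refine Finset.sum_le_sum fun s' _ => ?_
        rw [abs_mul, abs_of_nonneg (hp_nonneg _ _ _)]
    _ ≤ γ * ∑ s', p s₀ a₀ s' * C := by
        apply mul_le_mul_of_nonneg_left _ hγ0
        exact Finset.sum_le_sum fun s' _ =>
          mul_le_mul_of_nonneg_left (hVinv s') (hp_nonneg _ _ _)
    _ = γ * C := by rw [← Finset.sum_mul, hp_sum, one_mul]
  have hC0 : C ≤ 0 := by nlinarith
  intro s a
  have := hCmax s a
  have habs : (0:ℝ) ≤ |Q (g • s) (g • a) - Q s a| := abs_nonneg _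
  have : |Q (g • s) (g • a) - Q s a| = 0 := le_antisymm (this.trans hC0) habs
  have := abs_eq_zero.mp this
  linarith
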